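/- Let q ≥ 1 be fixed, λ_1 ≥ ... ≥ λ_q > 0, and λ_j = 0 for j > q. Let (p_n) be integers with p_n ≥ q + 2 and p_n ≤ C₀·n^α for some constant C₀ and some 0 ≤ α < 1. For each n let λ̂_1(n), ..., λ̂_{p_n}(n) ≥ 0 satisfy |λ̂_j(n) − λ_j| ≤ K·(p_n/n)^{1/2} for all n and all 1 ≤ j ≤ p_n, for some constant K. Let c₁(n), c₂(n) > 0 with c₁(n) → 0, c₂(n) → 0 and n·c₁(n)·c₂(n)/p_n → ∞, and fix τ ∈ (0, 1). Define ŝ_j(n) = λ̂_j(n)/(1 + λ̂_j(n)), ŝ*_j(n) = (ŝ_j(n)² + c₁(n))/(ŝ_{j+1}(n)² + c₁(n)) − 1, and r_j(n) = (ŝ*_{j+1}(n) + c₂(n))/(ŝ*_j(n) + c₂(n)). Then there exists N such that for all n ≥ N: r_q(n) ≤ τ and r_j(n) > τ for every j with q < j ≤ p_n − 2; consequently the set {j ∈ {1, ..., p_n − 2} : r_j(n) ≤ τ} is nonempty with maximum equal to q. -/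

import Mathlib

open Filter

/-- `ŝ_j = λ̂_j / (1 + λ̂_j)`. -/
noncomputable def sHat (lam : ℕ → ℝ) (j : ℕ) : ℝ := lam j / (1 + lam j)

/-- First-round ridge ratio `ŝ*_j = (ŝ_j² + c₁)/(ŝ_{j+1}² + c₁) − 1`. -/
noncomputable def sStar (lam : ℕ → ℝ) (c1 : ℝ) (j : ℕ) : ℝ :=
  ((sHat lam j) ^ 2 + c1) / ((sHat lam (j + 1)) ^ 2 + c1) - 1

/-- Second-round ridge ratio `r_j = (ŝ*_{j+1} + c₂)/(ŝ*_j + c₂)`. -/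
noncomputable def rRatio (lam : ℕ → ℝ) (c1 c2 : ℝ) (j : ℕ) : ℝ :=
  (sStar lam c1 (j + 1) + c2) / (sStar lam c1 j + c2)

lemma tdrr_lip (a b : ℝ) (ha : 0 ≤ a) (hb : 0 ≤ b) :
    |a / (1 + a) - b / (1 + b)| ≤ |a - b| := by
  have h1a : (0:ℝ) < 1 + a := by linarith
  have h1b : (0:ℝ) < 1 + b := by linarith
  rw [div_sub_div _ _ h1a.ne' h1b.ne']
  have he : a * (1 + b) - (1 + a) * b = a - b := by ring
  rw [he, abs_div, abs_of_pos (mul_pos h1a h1b)]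
  exact div_le_self (abs_nonneg _) (by nlinarith)

lemma tdrr_absdiv (x y E c : ℝ) (hx : 0 ≤ x) (hxE : x ≤ E) (hy : 0 ≤ y) (hyE : y ≤ E)
    (hc : 0 < c) : |(x - y) / (y + c)| ≤ E / c := by
  have hyc : (0:ℝ) < y + c := by linarith
  have hE : 0 ≤ E := hx.trans hxE
  rw [abs_div, abs_of_pos hyc, div_le_div_iff₀ hyc hc]
  have hxy : |x - y| ≤ E := abs_sub_le_iff.mpr ⟨by linarith, by linarith⟩
  nlinarith [abs_nonneg (x - y), mul_nonneg hE hy]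


set_option maxHeartbeats 1600000 in
/-- TDRR with a divergent number of covariates `p n ≤ C₀·n^α`, `0 ≤ α < 1`: if the
estimated eigenvalues converge at rate `(p n / n)^{1/2}` and the ridges satisfy
`c₁(n) → 0`, `c₂(n) → 0`, `n·c₁(n)·c₂(n)/p n → ∞`, then eventually `r_q(n) ≤ τ` and
`r_j(n) > τ` for `q < j ≤ p n − 2`; consequently the set
`{j ∈ {1, ..., p n − 2} : r_j(n) ≤ τ}` is nonempty with maximum `q`. -/
theorem tdrr_identifies_q_divergent_p (q : ℕ) (hq : 1 ≤ q)
    (lam : ℕ → ℝ)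
    (hdec : ∀ i j, 1 ≤ i → i ≤ j → j ≤ q → lam j ≤ lam i)
    (hpos : 0 < lam q)
    (hzero : ∀ j, q < j → lam j = 0)
    (p : ℕ → ℕ) (hp : ∀ n, q + 2 ≤ p n)
    (C₀ α : ℝ) (hα0 : 0 ≤ α) (hα1 : α < 1)
    (hpgrowth : ∀ n, 1 ≤ n → (p n : ℝ) ≤ C₀ * (n : ℝ) ^ α)
    (lamhat : ℕ → ℕ → ℝ)
    (hnn : ∀ n j, 1 ≤ j → j ≤ p n → 0 ≤ lamhat n j)
    (K : ℝ)
    (hrate : ∀ n, 1 ≤ n → ∀ j, 1 ≤ j → j ≤ p n →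
      |lamhat n j - lam j| ≤ K * Real.sqrt ((p n : ℝ) / n))
    (c1 c2 : ℕ → ℝ) (hc1pos : ∀ n, 0 < c1 n) (hc2pos : ∀ n, 0 < c2 n)
    (hc1 : Tendsto c1 atTop (nhds 0)) (hc2 : Tendsto c2 atTop (nhds 0))
    (hncc : Tendsto (fun n : ℕ => (n : ℝ) * c1 n * c2 n / (p n : ℝ)) atTop atTop)
    (τ : ℝ) (hτ0 : 0 < τ) (hτ1 : τ < 1) :
    ∃ N, ∀ n, N ≤ n →
      rRatio (lamhat n) (c1 n) (c2 n) q ≤ τ ∧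
      (∀ j, q < j → j ≤ p n - 2 → τ < rRatio (lamhat n) (c1 n) (c2 n) j) ∧
      {j | 1 ≤ j ∧ j ≤ p n - 2 ∧ rRatio (lamhat n) (c1 n) (c2 n) j ≤ τ}.Nonempty ∧
      sSup {j | 1 ≤ j ∧ j ≤ p n - 2 ∧ rRatio (lamhat n) (c1 n) (c2 n) j ≤ τ} = q := by
  have hτ1' : (0:ℝ) < 1 - τ := by linarith
  set s : ℝ := lam q / (1 + lam q) with hs_def
  have hs : 0 < s := div_pos hpos (by linarith)
  -- K is nonnegative
  have hK : 0 ≤ K := by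
    have hb := hrate 1 le_rfl q hq (by have := hp 1; omega)
    have hp1 : (0:ℝ) < (p 1 : ℝ) := by exact_mod_cast (show 0 < p 1 by have := hp 1; omega)
    have hsq : 0 < Real.sqrt ((p 1 : ℝ) / ((1:ℕ):ℝ)) := by
      apply Real.sqrt_pos.mpr
      simpa using hp1
    nlinarith [abs_nonneg (lamhat 1 q - lam q)]
  -- the constant M
  set M : ℝ := (K^2+1)*(1+τ)/(1-τ) + K^2 + 1 with hMdef
  have hM1 : K^2 + 1 < M := by
    have h : 0 < (K^2+1)*(1+τ)/(1-τ) := by positivity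
    rw [hMdef]; linarith
  have hMpos : 0 < M := by nlinarith [sq_nonneg K]
  have hMτ : (K^2+1)*(1+τ) < M*(1-τ) := by
    have h1 : M*(1-τ) = (K^2+1)*(1+τ) + (K^2+1)*(1-τ) := by
      rw [hMdef]; field_simp; ring
    nlinarith [sq_nonneg K]
  -- p n / n → 0
  have hpn0 : Tendsto (fun n : ℕ => (p n : ℝ) / (n:ℝ)) atTop (nhds 0) := by
    have h2 : Tendsto (fun n : ℕ => (n:ℝ) ^ (α - 1)) atTop (nhds 0) := by
      have h3 := (tendsto_rpow_neg_atTop (show (0:ℝ) < 1 - α by linarith)).comp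
        tendsto_natCast_atTop_atTop (α := ℕ)
      simpa [neg_sub, Function.comp_def] using h3
    have h1 : Tendsto (fun n : ℕ => C₀ * (n:ℝ) ^ (α - 1)) atTop (nhds 0) := by
      simpa using tendsto_const_nhds.mul h2
    apply squeeze_zero' (Eventually.of_forall fun n => by positivity) _ h1
    filter_upwards [eventually_ge_atTop 1] with n hn
    have hn0 : (0:ℝ) < (n:ℝ) := by exact_mod_cast hn
    have hg := hpgrowth n hn
    have he : C₀ * (n:ℝ) ^ α / (n:ℝ) = C₀ * (n:ℝ) ^ (α - 1) := by
      rw [mul_div_assoc]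
      congr 1
      rw [Real.rpow_sub hn0, Real.rpow_one]
    calc (p n : ℝ) / (n:ℝ) ≤ C₀ * (n:ℝ) ^ α / (n:ℝ) := by
          gcongr
      _ = C₀ * (n:ℝ) ^ (α - 1) := he
  -- E n := K^2 * (p n / n) → 0
  have hE0 : Tendsto (fun n : ℕ => K^2 * ((p n : ℝ) / (n:ℝ))) atTop (nhds 0) := by
    simpa using tendsto_const_nhds.mul hpn0
  have hprod : Tendsto (fun n : ℕ => c2 n * (K^2 * ((p n : ℝ) / (n:ℝ)) + c1 n))
      atTop (nhds 0) := by
    simpa using hc2.mul (hE0.add hc1)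
  have hev : ∀ᶠ n in atTop, 1 ≤ n ∧ K^2 * ((p n : ℝ) / (n:ℝ)) ≤ s^2/8 ∧
      M ≤ (n : ℝ) * c1 n * c2 n / (p n : ℝ) ∧
      c2 n * (K^2 * ((p n : ℝ) / (n:ℝ)) + c1 n) ≤ τ * s^2 / 16 := by
    filter_upwards [eventually_ge_atTop 1,
      hE0.eventually (eventually_le_nhds (by positivity : (0:ℝ) < s^2/8)),
      hncc.eventually_ge_atTop M,
      hprod.eventually (eventually_le_nhds (by positivity : (0:ℝ) < τ * s^2 / 16))]
      with n h1 h2 h3 h4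
    exact ⟨h1, h2, h3, h4⟩
  obtain ⟨N, hN⟩ := eventually_atTop.mp hev
  refine ⟨N, fun n hn => ?_⟩
  obtain ⟨hn1, hEn, hMn, hPn⟩ := hN n hn
  -- basic positivity facts for this n
  have hpn2 : q + 2 ≤ p n := hp n
  have hc1n := hc1pos n
  have hc2n := hc2pos n
  have hnR : (0:ℝ) < (n:ℝ) := by exact_mod_cast hn1
  have hpR : (0:ℝ) < (p n : ℝ) := by exact_mod_cast (show 0 < p n by omega)
  -- ε and its square
  set ε : ℝ := K * Real.sqrt ((p n : ℝ) / (n:ℝ)) with hεdef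
  have hεnn : 0 ≤ ε := mul_nonneg hK (Real.sqrt_nonneg _)
  have hε2 : ε^2 = K^2 * ((p n : ℝ) / (n:ℝ)) := by
    rw [hεdef, mul_pow, Real.sq_sqrt (by positivity)]
  rw [← hε2] at hEn hPn
  -- sHat bounds for indices beyond q
  have hsmall : ∀ j, q < j → j ≤ p n → sHat (lamhat n) j ≤ ε ∧ 0 ≤ sHat (lamhat n) j := by
    intro j hj1 hj2
    have h0 := hnn n j (by omega) hj2
    have hb := hrate n hn1 j (by omega) hj2
    rw [hzero j hj1, sub_zero, abs_of_nonneg h0] at hb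
    have h1p : (0:ℝ) < 1 + lamhat n j := by linarith
    refine ⟨le_trans (div_le_self h0 (by linarith)) hb, div_nonneg h0 h1p.le⟩
  have hsq_small : ∀ j, q < j → j ≤ p n → (sHat (lamhat n) j)^2 ≤ ε^2 := by
    intro j hj1 hj2
    obtain ⟨h1, h0⟩ := hsmall j hj1 hj2
    exact pow_le_pow_left₀ h0 h1 2
  -- sHat at q is close to s
  have hq_le_pn : q ≤ p n := by omega
  have hsq_close : |sHat (lamhat n) q - s| ≤ ε := by
    have hlip := tdrr_lip (lamhat n q) (lam q) (hnn n q hq hq_le_pn) hpos.le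
    exact hlip.trans (hrate n hn1 q hq hq_le_pn)
  have hεhalf : ε ≤ s/2 := by
    rw [← Real.sqrt_sq hεnn, ← Real.sqrt_sq (by linarith : (0:ℝ) ≤ s/2)]
    apply Real.sqrt_le_sqrt
    nlinarith [hε2, hEn]
  have hshq : s/2 ≤ sHat (lamhat n) q := by
    have := abs_le.mp hsq_close
    linarith [this.1]
  have hshq2 : s^2/4 ≤ (sHat (lamhat n) q)^2 := by
    have h := pow_le_pow_left₀ (by linarith : (0:ℝ) ≤ s/2) hshq 2
    have h2 : (s/2)^2 = s^2/4 := by ring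
    linarith
  -- sStar as a single fraction
  have hsStar_eq : ∀ j, sStar (lamhat n) (c1 n) j =
      ((sHat (lamhat n) j)^2 - (sHat (lamhat n) (j+1))^2) /
      ((sHat (lamhat n) (j+1))^2 + c1 n) := by
    intro j
    have hd : (sHat (lamhat n) (j+1))^2 + c1 n ≠ 0 := by
      have h1 := sq_nonneg (sHat (lamhat n) (j+1)); positivity
    unfold sStar
    rw [div_sub_one hd]
    congr 1
    ring
  -- |sStar j| ≤ ε²/c1 for j > q
  have hB : ∀ j, q < j → j + 1 ≤ p n →
      |sStar (lamhat n) (c1 n) j| ≤ ε^2 / c1 n := by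
    intro j hj hj1
    rw [hsStar_eq]
    exact tdrr_absdiv _ _ _ _ (sq_nonneg _) (hsq_small j hj (by omega)) (sq_nonneg _)
      (hsq_small (j+1) (by omega) hj1) hc1n
  -- ε²/c1 ≤ (K²+1)·c2/M
  have hEc1 : ε^2 / c1 n ≤ (K^2+1) * c2 n / M := by
    rw [hε2]
    have hkey : K^2 * ((p n : ℝ)/(n:ℝ)) / c1 n
        = K^2 * c2 n / ((n:ℝ) * c1 n * c2 n / (p n : ℝ)) := by
      field_simp
    rw [hkey]
    exact div_le_div₀ (by positivity) (by nlinarith [hc2n]) hMpos hMn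
  have hBpos : 0 ≤ (K^2+1) * c2 n / M := by positivity
  have hBc2 : (K^2+1) * c2 n / M < c2 n := by
    rw [div_lt_iff₀ hMpos]
    nlinarith [hM1, hc2n]
  have hB' : (K^2+1) * c2 n / M * (1+τ) < c2 n * (1-τ) := by
    rw [div_mul_eq_mul_div, div_lt_iff₀ hMpos]
    nlinarith [hMτ, hc2n]
  have hτB : τ * (c2 n + (K^2+1) * c2 n / M) < c2 n - (K^2+1) * c2 n / M := by
    nlinarith [hB']
  -- r_j > τ for q < j ≤ p n - 2
  have hrbig : ∀ j, q < j → j ≤ p n - 2 → τ < rRatio (lamhat n) (c1 n) (c2 n) j := by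
    intro j hj hj2
    have h1 := abs_le.mp ((hB j hj (by omega)).trans hEc1)
    have h2 := abs_le.mp ((hB (j+1) (by omega) (by omega)).trans hEc1)
    have hDpos : 0 < sStar (lamhat n) (c1 n) j + c2 n := by linarith [h1.1]
    unfold rRatio
    rw [lt_div_iff₀ hDpos]
    have hm := mul_le_mul_of_nonneg_left h1.2 hτ0.le
    nlinarith
  -- r_q ≤ τ
  have hup := (abs_le.mp ((hB (q+1) (by omega) (by omega)).trans hEc1)).2
  have hq1small := hsq_small (q+1) (by omega) (by omega)
  have hqlow : (s^2/8) / (ε^2 + c1 n) ≤ sStar (lamhat n) (c1 n) q := by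
    rw [hsStar_eq]
    apply div_le_div₀
    · nlinarith [hq1small]
    · nlinarith [hq1small]
    · nlinarith [sq_nonneg (sHat (lamhat n) (q+1))]
    · linarith [hq1small]
  have hε2nn : (0:ℝ) ≤ ε^2 := sq_nonneg ε
  have hd0 : 0 < (s^2/8) / (ε^2 + c1 n) := by positivity
  have hrq_small : rRatio (lamhat n) (c1 n) (c2 n) q ≤ τ := by
    have hDq : 0 < sStar (lamhat n) (c1 n) q + c2 n := by linarith
    unfold rRatio
    rw [div_le_iff₀ hDq]
    have hτd : τ * ((s^2/8) / (ε^2 + c1 n)) ≤ τ * (sStar (lamhat n) (c1 n) q + c2 n) :=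
      mul_le_mul_of_nonneg_left (by linarith) hτ0.le
    have h2c : 2 * c2 n ≤ τ * ((s^2/8) / (ε^2 + c1 n)) := by
      rw [← mul_div_assoc, le_div_iff₀ (by linarith : (0:ℝ) < ε^2 + c1 n)]
      nlinarith [hPn]
    linarith
  -- conclude
  refine ⟨hrq_small, hrbig, ⟨q, ⟨hq, by omega, hrq_small⟩⟩, ?_⟩
  have hqS : q ∈ {j | 1 ≤ j ∧ j ≤ p n - 2 ∧ rRatio (lamhat n) (c1 n) (c2 n) j ≤ τ} :=
    ⟨hq, by omega, hrq_small⟩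
  have hub : ∀ j ∈ {j | 1 ≤ j ∧ j ≤ p n - 2 ∧ rRatio (lamhat n) (c1 n) (c2 n) j ≤ τ},
      j ≤ q := by
    intro j hjS
    by_contra h
    push_neg at h
    exact absurd hjS.2.2 (not_le.mpr (hrbig j h hjS.2.1))
  exact le_antisymm (csSup_le ⟨q, hqS⟩ hub) (le_csSup ⟨q, hub⟩ hqS)
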